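/- Let q be a prime power and p a prime with p ∤ q. Then μ(F_q,p) ≥ min{ δ + s − 1 + p − r_{δ,s}(p) : δ ∈ {2,…,p}, s ∈ {0,…,p−δ} }, where r_{δ,s}(p) is the largest size of a subset of Z/pZ not containing any set of the form A(δ,s) = {a + kb + rc : k ∈ {0,…,δ−2}, r ∈ {0,…,s}} with b, c coprime to p. -/

import Mathlib

open Polynomial

/-- The ring R(F,n) = F[X]/(X^n - 1). -/
abbrev CycRing (F : Type*) [Field F] (n : ℕ) := AdjoinRoot (X ^ n - Polynomial.C (1 : F))

/-- The unique representative of degree < n of an element of F[X]/(X^n-1). -/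
noncomputable def cycRep {F : Type*} [Field F] {n : ℕ} (f : CycRing F n) : F[X] :=
  if h : n = 0 then 0
  else AdjoinRoot.modByMonicHom (monic_X_pow_sub_C (1 : F) h) f

/-- Hamming weight of an element of F[X]/(X^n-1): the number of nonzero coefficients of
its representative of degree < n. -/
noncomputable def cycWt {F : Type*} [Field F] {n : ℕ} (f : CycRing F n) : ℕ :=
  (cycRep f).support.card

/-- Minimum distance of a cyclic code (ideal of F[X]/(X^n-1)). -/
noncomputable def cycDist {F : Type*} [Field F] {n : ℕ} (I : Ideal (CycRing F n)) : ℕ :=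
  sInf {w | ∃ f ∈ I, f ≠ 0 ∧ cycWt f = w}

/-- Dimension of a cyclic code as an F-vector space. -/
noncomputable def cycDim (F : Type*) [Field F] {n : ℕ} (I : Ideal (CycRing F n)) : ℕ :=
  Module.finrank F (Submodule.restrictScalars F I)

/-- The invariant μ(F,n). -/
noncomputable def mu (F : Type*) [Field F] (n : ℕ) : ℕ :=
  sInf {w | ∃ f : CycRing F n, f ≠ 0 ∧
    cycDist (Ideal.span {f}) + cycDim F (Ideal.span {f}) = w}

/-- `S` contains a set of shape A(δ,s) in ℤ/pℤ:
a set {a + k·b + r·c : k ∈ {0,…,δ−2}, r ∈ {0,…,s}} with b, c coprime to p (units). -/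
def ContainsShape {p : ℕ} (S : Set (ZMod p)) (δ s : ℕ) : Prop :=
  ∃ a b c : ZMod p, IsUnit b ∧ IsUnit c ∧
    ∀ k : ℕ, k ≤ δ - 2 → ∀ r : ℕ, r ≤ s → a + (k : ZMod p) * b + (r : ZMod p) * c ∈ S

/-- r_{δ,s}(p): the largest size of a subset of ℤ/pℤ not containing a set of
shape A(δ,s). -/
noncomputable def rShape (δ s p : ℕ) : ℕ :=
  sSup {c | ∃ S : Set (ZMod p), ¬ ContainsShape S δ s ∧ S.ncard = c}


lemma pow_congr_mod {K : Type*} [Field K] {α : K} {p : ℕ} (hα : IsPrimitiveRoot α p)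
    {m n : ℕ} (h : m ≡ n [MOD p]) : α ^ m = α ^ n := by
  rw [← pow_mod_orderOf (n := m), ← pow_mod_orderOf (n := n), ← hα.eq_orderOf]
  exact congrArg _ h

lemma pow_val_eq {K : Type*} [Field K] {α : K} {p : ℕ} [NeZero p] (hα : IsPrimitiveRoot α p)
    (m : ZMod p) (n : ℕ) (h : (n : ZMod p) = m) : α ^ m.val = α ^ n := by
  apply pow_congr_mod hα
  have hv : m.val = n % p := by rw [← h, ZMod.val_natCast]
  rw [hv]
  exact (Nat.mod_modEq n p)

lemma natCast_zmod_inj {p : ℕ} {i j : ℕ} (hi : i < p) (hj : j < p)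
    (h : (i : ZMod p) = (j : ZMod p)) : i = j := by
  rw [ZMod.natCast_eq_natCast_iff] at h
  rwa [Nat.ModEq, Nat.mod_eq_of_lt hi, Nat.mod_eq_of_lt hj] at h

lemma bch {p : ℕ} (hp : p.Prime) {K : Type*} [Field K] {α : K} (hα : IsPrimitiveRoot α p)
    {F : Type*} [Field F] [Algebra F K] {c : F[X]} (hc : c ≠ 0) (hdeg : c.natDegree < p)
    (a b : ZMod p) (hb : b ≠ 0)
    (hvan : ∀ j : ℕ, j < c.support.card → (aeval (α ^ (a + (j : ZMod p) * b).val)) c = 0) :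
    False := by
  haveI : Fact p.Prime := ⟨hp⟩
  set w := c.support.card with hwdef
  have hw1 : 0 < w := Finset.card_pos.2 (nonempty_support_iff.2 hc)
  let e : Fin w ≃ {x // x ∈ c.support} := c.support.equivFin.symm
  let T : Fin w → ℕ := fun i => (e i : ℕ)
  have hTmem : ∀ i, T i ∈ c.support := fun i => (e i).2
  have hTlt : ∀ i, T i < p := fun i => lt_of_le_of_lt (le_natDegree_of_mem_supp _ (hTmem i)) hdeg
  have hTinj : Function.Injective T := fun i j h => e.injective (Subtype.ext h)
  let x : Fin w → K := fun i => α ^ (b.val * T i)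
  have hxinj : Function.Injective x := by
    intro i j h
    apply hTinj
    have h1 : α ^ (b.val * T i % p) = α ^ (b.val * T j % p) := by
      rwa [pow_congr_mod hα (Nat.mod_modEq _ p), pow_congr_mod hα (Nat.mod_modEq _ p)]
    have h2 : b.val * T i % p = b.val * T j % p :=
      hα.pow_inj (Nat.mod_lt _ hp.pos) (Nat.mod_lt _ hp.pos) h1
    have h3 : ((b.val * T i : ℕ) : ZMod p) = ((b.val * T j : ℕ) : ZMod p) := by
      rw [ZMod.natCast_eq_natCast_iff]
      exact (Nat.mod_modEq _ p).symm.trans (h2 ▸ Nat.mod_modEq _ p)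
    push_cast at h3
    simp only [ZMod.natCast_val, ZMod.cast_id] at h3
    exact natCast_zmod_inj (hTlt i) (hTlt j) (mul_left_cancel₀ hb h3)
  let v : Fin w → K := fun i => algebraMap F K (c.coeff (T i)) * α ^ (a.val * T i)
  have hv0 : v = 0 := by
    apply Matrix.eq_zero_of_forall_pow_sum_mul_pow_eq_zero hxinj
    intro i
    have hvi := hvan i.1 i.2
    have hy : α ^ ((a + (i.1 : ZMod p) * b).val) = α ^ (a.val + i.1 * b.val) := by
      apply pow_val_eq hα
      push_cast
      simp only [ZMod.natCast_val, ZMod.cast_id]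
    rw [hy] at hvi
    rw [aeval_def, eval₂_eq_sum, Polynomial.sum_def] at hvi
    rw [← Finset.sum_coe_sort c.support] at hvi
    rw [← Equiv.sum_comp e
      (fun z : {x // x ∈ c.support} =>
        algebraMap F K (c.coeff z) * (α ^ (a.val + i.1 * b.val)) ^ (z : ℕ))] at hvi
    rw [← hvi]
    apply Finset.sum_congr rfl
    intro j _
    show v j * x j ^ (i.1) = _
    simp only [v, x, T]
    rw [← pow_mul, ← pow_mul, mul_assoc, ← pow_add]
    congr 1
    ring
  have : v ⟨0, hw1⟩ ≠ 0 := by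
    apply mul_ne_zero
    · simpa using (mem_support_iff.1 (hTmem ⟨0, hw1⟩))
    · exact pow_ne_zero _ (hα.ne_zero hp.ne_zero)
  rw [hv0] at this
  exact this rfl

lemma mk_cycRep {F : Type*} [Field F] {p : ℕ} (hp : p ≠ 0) (z : CycRing F p) :
    AdjoinRoot.mk _ (cycRep z) = z := by
  unfold cycRep
  rw [dif_neg hp]
  exact AdjoinRoot.mk_leftInverse (monic_X_pow_sub_C (1 : F) hp) z

lemma cycRep_ne_zero {F : Type*} [Field F] {p : ℕ} (hp : p ≠ 0) (z : CycRing F p)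
    (hz : z ≠ 0) : cycRep z ≠ 0 := by
  intro h
  apply hz
  rw [← mk_cycRep hp z, h, map_zero]

lemma cycRep_degree_lt {F : Type*} [Field F] {p : ℕ} (hp : p ≠ 0) (z : CycRing F p) :
    (cycRep z).degree < (p : ℕ∞) := by
  obtain ⟨z₀, rfl⟩ := AdjoinRoot.mk_surjective z
  unfold cycRep
  rw [dif_neg hp, AdjoinRoot.modByMonicHom_mk]
  have h := degree_modByMonic_lt z₀ (monic_X_pow_sub_C (1 : F) hp)
  rwa [degree_X_pow_sub_C (Nat.pos_of_ne_zero hp)] at h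

lemma cycRep_natDegree_lt {F : Type*} [Field F] {p : ℕ} (hp : p ≠ 0) (z : CycRing F p)
    (hz : z ≠ 0) : (cycRep z).natDegree < p :=
  (natDegree_lt_iff_degree_lt (cycRep_ne_zero hp z hz)).2 (cycRep_degree_lt hp z)

-- dimension lemma
lemma dim_lower {F : Type*} [Field F] {p : ℕ} (hp0 : p ≠ 0) (f : CycRing F p) (g : F[X])
    (hg0 : g ≠ 0) (hm : g.natDegree < p)
    (hmkg : AdjoinRoot.mk (X ^ p - Polynomial.C (1:F)) g ∈ Ideal.span {f}) :
    p - g.natDegree ≤ cycDim F (Ideal.span {f}) := by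
  classical
  set C := Ideal.span {f} with hC
  have hXne : (X ^ p - Polynomial.C (1:F)) ≠ 0 := (monic_X_pow_sub_C (1:F) hp0).ne_zero
  haveI : Module.Finite F (CycRing F p) := (AdjoinRoot.powerBasis hXne).finite
  set n := p - g.natDegree with hn
  let ψ : F[X] →ₗ[F] CycRing F p :=
    { toFun := fun s => AdjoinRoot.mk _ (s * g)
      map_add' := fun x y => by
        show AdjoinRoot.mk _ ((x + y) * g) = AdjoinRoot.mk _ (x * g) + AdjoinRoot.mk _ (y * g)
        rw [add_mul, map_add]
      map_smul' := fun a x => by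
        show AdjoinRoot.mk _ ((a • x) * g) = a • AdjoinRoot.mk _ (x * g)
        rw [smul_mul_assoc, AdjoinRoot.smul_mk] }
  let φ : Polynomial.degreeLT F n →ₗ[F] Submodule.restrictScalars F C :=
    LinearMap.codRestrict _ (ψ.comp (Submodule.subtype _)) (fun s => by
      show AdjoinRoot.mk _ ((s : F[X]) * g) ∈ C
      rw [map_mul]
      exact Ideal.mul_mem_left _ _ hmkg)
  have key : ∀ u : F[X], u ∈ Polynomial.degreeLT F n → AdjoinRoot.mk
      (X ^ p - Polynomial.C (1:F)) (u * g) = 0 → u = 0 := by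
    intro u hu hmk
    by_contra hu0
    rw [AdjoinRoot.mk_eq_zero] at hmk
    have h1 : p ≤ (u * g).natDegree := by
      have h := natDegree_le_of_dvd hmk (mul_ne_zero hu0 hg0)
      rwa [natDegree_X_pow_sub_C] at h
    have h2 : (u * g).natDegree = u.natDegree + g.natDegree := natDegree_mul hu0 hg0
    have h3 : u.natDegree < n :=
      (natDegree_lt_iff_degree_lt hu0).2 (Polynomial.mem_degreeLT.1 hu)
    omega
  have hinj : Function.Injective φ := by
    intro s t hst
    have h0 : AdjoinRoot.mk (X ^ p - Polynomial.C (1:F)) ((s : F[X]) * g)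
        = AdjoinRoot.mk (X ^ p - Polynomial.C (1:F)) ((t : F[X]) * g) := by
      have := congrArg Subtype.val hst
      simpa [φ, ψ] using this
    have h1 : AdjoinRoot.mk (X ^ p - Polynomial.C (1:F)) (((s : F[X]) - (t : F[X])) * g) = 0 := by
      rw [sub_mul, map_sub, h0, sub_self]
    exact Subtype.ext (sub_eq_zero.1 (key _ (Submodule.sub_mem _ s.2 t.2) h1))
  have hfr := LinearMap.finrank_le_finrank_of_injective hinj
  have hdeq : Module.finrank F (Polynomial.degreeLT F n) = n := by
    rw [(Polynomial.degreeLTEquiv F n).finrank_eq]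
    simp [Module.finrank_fin_fun]
  rw [hdeq] at hfr
  exact hfr

lemma aux_bound (p : ℕ) (hp : p.Prime) (F : Type*) [Field F] (hchar : ((p : ℕ) : F) ≠ 0)
    (f : CycRing F p) (hf : f ≠ 0) :
    sInf {v | ∃ δ s : ℕ, 2 ≤ δ ∧ δ ≤ p ∧ s ≤ p - δ ∧
      v = δ + s - 1 + (p - rShape δ s p)} ≤
    cycDist (Ideal.span {f}) + cycDim F (Ideal.span {f}) := by
  classical
  haveI : Fact p.Prime := ⟨hp⟩
  have hp0 : p ≠ 0 := hp.ne_zero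
  set C := Ideal.span {f} with hC
  set d := cycDist C with hd
  set k := cycDim F C with hk
  -- rShape sets are bounded above
  have hbdd : ∀ δ s : ℕ, BddAbove {c | ∃ S : Set (ZMod p), ¬ ContainsShape S δ s ∧ S.ncard = c} := by
    intro δ s
    refine ⟨p, ?_⟩
    rintro c ⟨S, -, rfl⟩
    have h1 : S.ncard ≤ (Set.univ : Set (ZMod p)).ncard :=
      Set.ncard_le_ncard (Set.subset_univ S) Set.finite_univ
    rwa [Set.ncard_univ, Nat.card_eq_fintype_card, ZMod.card] at h1
  -- minimum weight codeword
  have hne : {w | ∃ c ∈ C, c ≠ 0 ∧ cycWt c = w}.Nonempty :=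
    ⟨cycWt f, f, Ideal.mem_span_singleton_self f, hf, rfl⟩
  obtain ⟨cmin, hcminC, hcmin0, hcminw⟩ : ∃ c ∈ C, c ≠ 0 ∧ cycWt c = d := Nat.sInf_mem hne
  have hd1 : 1 ≤ d := by
    rw [← hcminw]
    exact Finset.card_pos.2 (nonempty_support_iff.2 (cycRep_ne_zero hp0 cmin hcmin0))
  -- the splitting field and primitive root
  set Pp : ℕ+ := ⟨p, hp.pos⟩ with hPp
  haveI hnz : NeZero ((Pp : ℕ) : F) := ⟨by simpa [hPp] using hchar⟩
  set K := CyclotomicField Pp F with hK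
  obtain ⟨α, hα0⟩ := (CyclotomicField.isCyclotomicExtension Pp F).exists_isPrimitiveRoot
    (Set.mem_singleton _) Pp.ne_zero
  have hα : IsPrimitiveRoot α p := by simpa [hPp] using hα0
  -- the gcd polynomial
  set f₀ := cycRep f with hf₀def
  set g := EuclideanDomain.gcd f₀ (X ^ p - Polynomial.C (1:F)) with hgdef
  have hf₀ : f₀ ≠ 0 := cycRep_ne_zero hp0 f hf
  have hg0 : g ≠ 0 := fun h => hf₀ ((EuclideanDomain.gcd_eq_zero_iff.1 h).1)
  have hgf : g ∣ f₀ := EuclideanDomain.gcd_dvd_left _ _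
  have hgX : g ∣ X ^ p - Polynomial.C (1:F) := EuclideanDomain.gcd_dvd_right _ _
  have hm : g.natDegree < p :=
    lt_of_le_of_lt (natDegree_le_of_dvd hgf hf₀) (cycRep_natDegree_lt hp0 f hf)
  have hmkg : AdjoinRoot.mk (X ^ p - Polynomial.C (1:F)) g ∈ C := by
    rw [hC, Ideal.mem_span_singleton]
    refine ⟨AdjoinRoot.mk _ (EuclideanDomain.gcdA f₀ (X ^ p - Polynomial.C (1:F))), ?_⟩
    conv_lhs => rw [hgdef, EuclideanDomain.gcd_eq_gcd_ab f₀ (X ^ p - Polynomial.C (1:F))]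
    rw [map_add, map_mul, map_mul, AdjoinRoot.mk_self, zero_mul, add_zero, mk_cycRep hp0 f]
  have hkbound : p - g.natDegree ≤ k := dim_lower hp0 f g hg0 hm hmkg
  -- every codeword's representative is divisible by g
  have hdvd_rep : ∀ z ∈ C, g ∣ cycRep z := by
    intro z hz
    rw [hC, Ideal.mem_span_singleton] at hz
    obtain ⟨r, hr⟩ := hz
    obtain ⟨r₀, rfl⟩ := AdjoinRoot.mk_surjective r
    have h1 : AdjoinRoot.mk (X ^ p - Polynomial.C (1:F)) (cycRep z - f₀ * r₀) = 0 := by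
      rw [map_sub, map_mul, mk_cycRep hp0 z, mk_cycRep hp0 f, hr, sub_self]
    rw [AdjoinRoot.mk_eq_zero] at h1
    have h2 : g ∣ cycRep z - f₀ * r₀ := dvd_trans hgX h1
    have h3 : g ∣ f₀ * r₀ := Dvd.dvd.mul_right hgf r₀
    have := dvd_add h2 h3
    rwa [sub_add_cancel] at this
  -- the zero set Z'
  have hpK : ((p : ℕ) : K) ≠ 0 := by
    intro h
    apply hchar
    have h2 : algebraMap F K ((p : ℕ) : F) = 0 := by rwa [map_natCast]
    exact (_root_.map_eq_zero (algebraMap F K)).1 h2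
  set gK := g.map (algebraMap F K) with hgKdef
  have hinjFK : Function.Injective (algebraMap F K) := (algebraMap F K).injective
  have hgK0 : gK ≠ 0 := (Polynomial.map_ne_zero_iff hinjFK).2 hg0
  have hmapX : (X ^ p - Polynomial.C (1:F)).map (algebraMap F K) = X ^ p - Polynomial.C (1:K) := by
    simp [Polynomial.map_sub, Polynomial.map_pow]
  have hgKdvd : gK ∣ X ^ p - Polynomial.C (1:K) := hmapX ▸ Polynomial.map_dvd _ hgX
  have hXKne : (X ^ p - Polynomial.C (1:K)) ≠ 0 := (monic_X_pow_sub_C (1:K) hp0).ne_zero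
  have hXKsep : (X ^ p - Polynomial.C (1:K)).Separable :=
    separable_X_pow_sub_C 1 hpK one_ne_zero
  have hXKsplits : (X ^ p - Polynomial.C (1:K)).Splits := by
    rw [Polynomial.splits_iff_card_roots, natDegree_X_pow_sub_C]
    have h1 := hα.card_nthRoots (1 : K)
    rw [if_pos ⟨1, one_pow p⟩] at h1
    exact h1
  have hgKsep : gK.Separable := hXKsep.of_dvd hgKdvd
  have hgKsplits : gK.Splits :=
    hXKsplits.of_dvd hXKne hgKdvd
  have haeval : ∀ y : K, aeval y g = Polynomial.eval y gK := fun y => by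
    rw [hgKdef, Polynomial.eval_map, aeval_def]
  have hroots : gK.roots.toFinset.card = g.natDegree := by
    rw [Multiset.toFinset_card_of_nodup (Polynomial.nodup_roots hgKsep),
      Polynomial.splits_iff_card_roots.1 hgKsplits, hgKdef,
      natDegree_map_eq_of_injective hinjFK]
  set Z' := Finset.univ.filter (fun i : ZMod p => (aeval (α ^ (ZMod.val i))) g = 0) with hZ'def
  have hZcard : Z'.card = g.natDegree := by
    rw [← hroots]
    apply Finset.card_bij (fun i _ => α ^ (ZMod.val i))
    · intro i hi
      rw [hZ'def, Finset.mem_filter] at hi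
      rw [Multiset.mem_toFinset, Polynomial.mem_roots hgK0]
      show Polynomial.eval (α ^ i.val) gK = 0
      rw [← haeval]
      exact hi.2
    · intro i hi j hj h
      exact ZMod.val_injective p (hα.pow_inj (ZMod.val_lt i) (ZMod.val_lt j) h)
    · intro y hy
      rw [Multiset.mem_toFinset, Polynomial.mem_roots hgK0] at hy
      have hyp : y ^ p = 1 := by
        obtain ⟨t, ht⟩ := hgKdvd
        have h1 : Polynomial.eval y (X ^ p - Polynomial.C (1:K)) = 0 := by
          rw [ht, Polynomial.eval_mul, hy, zero_mul]
        simpa [sub_eq_zero] using h1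
      obtain ⟨i, hip, hie⟩ := hα.eq_pow_of_pow_eq_one hyp
      refine ⟨(i : ZMod p), ?_, ?_⟩
      · rw [hZ'def, Finset.mem_filter]
        refine ⟨Finset.mem_univ _, ?_⟩
        rw [ZMod.val_cast_of_lt hip, haeval, hie]
        exact hy
      · rw [ZMod.val_cast_of_lt hip, hie]
  -- codewords vanish on Z'
  have hvanish : ∀ i : ZMod p, i ∈ Z' → ∀ z ∈ C, (aeval (α ^ (ZMod.val i))) (cycRep z) = 0 := by
    intro i hi z hz
    obtain ⟨t, ht⟩ := hdvd_rep z hz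
    rw [hZ'def, Finset.mem_filter] at hi
    rw [ht, map_mul, hi.2, zero_mul]
  -- case split
  rcases lt_or_ge d p with hdp | hdp
  · -- case d < p : use δ = 2, s = d - 1
    have hnoAP : ¬ ContainsShape (↑Z' : Set (ZMod p)) 2 (d - 1) := by
      rintro ⟨a, b, cc, hbu, hcu, hmem⟩
      refine bch hp hα (cycRep_ne_zero hp0 cmin hcmin0)
        (cycRep_natDegree_lt hp0 cmin hcmin0) a cc hcu.ne_zero ?_
      intro j hj
      have hjw : j ≤ d - 1 := by
        rw [show (cycRep cmin).support.card = cycWt cmin from rfl, hcminw] at hj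
        omega
      have h1 := hmem 0 (by omega) j hjw
      simp only [Nat.cast_zero, zero_mul, add_zero] at h1
      have h2 : (a + (j : ZMod p) * cc) ∈ Z' := h1
      exact hvanish _ h2 cmin hcminC
    have hrS : g.natDegree ≤ rShape 2 (d - 1) p :=
      le_csSup (hbdd 2 (d - 1))
        ⟨(↑Z' : Set (ZMod p)), hnoAP, by rw [Set.ncard_coe_finset, hZcard]⟩
    have hmem : (2 + (d - 1) - 1 + (p - rShape 2 (d - 1) p)) ∈
        {v | ∃ δ s : ℕ, 2 ≤ δ ∧ δ ≤ p ∧ s ≤ p - δ ∧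
          v = δ + s - 1 + (p - rShape δ s p)} :=
      ⟨2, d - 1, le_refl 2, hp.two_le, by omega, rfl⟩
    calc sInf _ ≤ _ := Nat.sInf_le hmem
      _ ≤ d + k := by omega
  · -- case d ≥ p : use δ = p, s = 0
    set SF : Finset (ZMod p) := (Finset.range (p - 2)).image (Nat.cast : ℕ → ZMod p) with hSF
    have hSFcard : SF.card = p - 2 := by
      rw [hSF, Finset.card_image_of_injOn, Finset.card_range]
      intro i hi j hj hij
      rw [Finset.mem_coe, Finset.mem_range] at hi hj
      exact natCast_zmod_inj (by omega) (by omega) hij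
    have hnoAP : ¬ ContainsShape (↑SF : Set (ZMod p)) p 0 := by
      rintro ⟨a, b, cc, hbu, hcu, hmem⟩
      set P : Finset (ZMod p) := (Finset.range (p - 1)).image (fun kk : ℕ => a + (kk : ZMod p) * b)
        with hP
      have hPcard : P.card = p - 1 := by
        rw [hP, Finset.card_image_of_injOn, Finset.card_range]
        intro i hi j hj hij
        rw [Finset.mem_coe, Finset.mem_range] at hi hj
        have h1 : (i : ZMod p) * b = (j : ZMod p) * b := by
          have := hij
          simpa using this
        have h2 : (i : ZMod p) = (j : ZMod p) := mul_right_cancel₀ hbu.ne_zero h1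
        exact natCast_zmod_inj (by omega) (by omega) h2
      have hsub : P ⊆ SF := by
        intro x hx
        rw [hP, Finset.mem_image] at hx
        obtain ⟨kk, hkk, rfl⟩ := hx
        rw [Finset.mem_range] at hkk
        have h1 := hmem kk (by omega) 0 (le_refl 0)
        simpa using h1
      have := Finset.card_le_card hsub
      rw [hPcard, hSFcard] at this
      have := hp.two_le
      omega
    have hrS : p - 2 ≤ rShape p 0 p :=
      le_csSup (hbdd p 0) ⟨(↑SF : Set (ZMod p)), hnoAP, by rw [Set.ncard_coe_finset, hSFcard]⟩
    have hmem : (p + 0 - 1 + (p - rShape p 0 p)) ∈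
        {v | ∃ δ s : ℕ, 2 ≤ δ ∧ δ ≤ p ∧ s ≤ p - δ ∧
          v = δ + s - 1 + (p - rShape δ s p)} :=
      ⟨p, 0, hp.two_le, le_refl p, by omega, rfl⟩
    have hk1 : 1 ≤ k := by omega
    calc sInf _ ≤ _ := Nat.sInf_le hmem
      _ ≤ d + k := by
        have h2 := hp.two_le
        omega

/-- μ(F_q,p) ≥ min{ δ + s − 1 + p − r_{δ,s}(p) : δ ∈ {2,…,p}, s ∈ {0,…,p−δ} }. -/
theorem mu_ge_hartmann_tzeng (q p : ℕ) (F : Type*) [Field F] [Fintype F]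
    (hq : Fintype.card F = q) (hp : p.Prime) (hpq : ¬ p ∣ q) :
    sInf {v | ∃ δ s : ℕ, 2 ≤ δ ∧ δ ≤ p ∧ s ≤ p - δ ∧
      v = δ + s - 1 + (p - rShape δ s p)} ≤ mu F p := by
  haveI : Fact p.Prime := ⟨hp⟩
  have hchar : ((p : ℕ) : F) ≠ 0 := by
    intro h
    obtain ⟨n, hcp, hcard⟩ := FiniteField.card F (ringChar F)
    have hdvd : ringChar F ∣ p := ringChar.dvd h
    have hcpp : ringChar F = p := ((Nat.prime_dvd_prime_iff_eq hcp hp).1 hdvd)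
    apply hpq
    rw [← hq, hcard, hcpp]
    exact dvd_pow_self p n.ne_zero
  haveI : Nontrivial (CycRing F p) := by
    apply AdjoinRoot.nontrivial
    rw [degree_X_pow_sub_C hp.pos]
    exact_mod_cast hp.ne_zero
  have hBne : {w | ∃ f : CycRing F p, f ≠ 0 ∧
      cycDist (Ideal.span {f}) + cycDim F (Ideal.span {f}) = w}.Nonempty :=
    ⟨_, 1, one_ne_zero, rfl⟩
  obtain ⟨f, hf0, hfe⟩ : ∃ f : CycRing F p, f ≠ 0 ∧
      cycDist (Ideal.span {f}) + cycDim F (Ideal.span {f}) = mu F p := Nat.sInf_mem hBne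
  exact le_of_le_of_eq (aux_bound p hp F hchar f hf0) hfe
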